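/- Let k be a field, K a field extension of k, A a k-algebra, and ℓ, m positive integers. Suppose ρ : A → E_{(ℓ,m)}(K) is an (ℓ,m)-extension of irreducible representations, and set Λ = Kρ(A). Then ρ does not split if and only if there exists an invertible matrix Q ∈ M_{ℓ+m}(K) with Q E_{(ℓ,m)}(K) Q⁻¹ ⊆ E_{(ℓ,m)}(K) such that SupDiag_{ℓ+m} ∈ Q Λ Q⁻¹. -/

import Mathlib

open Matrix

noncomputable section

/-- The `n × n` matrix with `1`s on the superdiagonal and `0`s elsewhere. -/
def supDiag (K : Type*) [Semiring K] (n : ℕ) : Matrix (Fin n) (Fin n) K :=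
  Matrix.of fun i j => if (i : ℕ) + 1 = (j : ℕ) then 1 else 0

/-- The `n × n` matrix with `1`s on the subdiagonal and `0`s elsewhere. -/
def subDiag (K : Type*) [Semiring K] (n : ℕ) : Matrix (Fin n) (Fin n) K :=
  (supDiag K n).transpose

/-- Block index function for the `(ℓ, m)` block decomposition of `Fin (ℓ + m)`. -/
def blkIdx (ℓ m : ℕ) (i : Fin (ℓ + m)) : ℕ := if (i : ℕ) < ℓ then 0 else 1

/-- `E_{(ℓ,m)}(K)`: the `K`-subalgebra of `M_{ℓ+m}(K)` of block upper triangular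
matrices `[[a, b], [0, c]]` with `a ∈ M_ℓ(K)`, `b ∈ M_{ℓ×m}(K)`, `c ∈ M_m(K)`. -/
def Eblk (K : Type*) [CommRing K] (ℓ m : ℕ) :
    Subalgebra K (Matrix (Fin (ℓ + m)) (Fin (ℓ + m)) K) where
  carrier := { M | M.BlockTriangular (blkIdx ℓ m) }
  mul_mem' ha hb := ha.mul hb
  add_mem' ha hb := ha.add hb
  one_mem' := Matrix.blockTriangular_one
  algebraMap_mem' r := fun i j hij => by
    rw [Matrix.algebraMap_matrix_apply, if_neg]
    rintro rfl
    exact lt_irrefl _ hij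

/-- `T_{(ℓ,m)}(K)`: the set of block matrices `[[0, b], [0, 0]]` with `b ∈ M_{ℓ×m}(K)`. -/
def Tblk (K : Type*) [Semiring K] (ℓ m : ℕ) : Set (Matrix (Fin (ℓ + m)) (Fin (ℓ + m)) K) :=
  { M | ∀ i j : Fin (ℓ + m), ¬((i : ℕ) < ℓ ∧ ℓ ≤ (j : ℕ)) → M i j = 0 }

/-- `π_ℓ`: the upper-left `ℓ × ℓ` block of an `(ℓ+m) × (ℓ+m)` matrix. -/
def blkL (K : Type*) [Semiring K] (ℓ m : ℕ) (M : Matrix (Fin (ℓ + m)) (Fin (ℓ + m)) K) :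
    Matrix (Fin ℓ) (Fin ℓ) K :=
  Matrix.of fun i j => M (Fin.castAdd m i) (Fin.castAdd m j)

/-- `π_m`: the lower-right `m × m` block of an `(ℓ+m) × (ℓ+m)` matrix. -/
def blkR (K : Type*) [Semiring K] (ℓ m : ℕ) (M : Matrix (Fin (ℓ + m)) (Fin (ℓ + m)) K) :
    Matrix (Fin m) (Fin m) K :=
  Matrix.of fun i j => M (Fin.natAdd ℓ i) (Fin.natAdd ℓ j)

/-- The block matrix `I_ℓ = [[1, 0], [0, 0]]` inside `M_{ℓ+m}(K)`. -/
def idL (K : Type*) [Semiring K] (ℓ m : ℕ) : Matrix (Fin (ℓ + m)) (Fin (ℓ + m)) K :=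
  Matrix.of fun i j => if i = j ∧ (i : ℕ) < ℓ then 1 else 0

section Aux
variable {K : Type*} [Field K] {ℓ m : ℕ}

lemma mem_Eblk {M : Matrix (Fin (ℓ+m)) (Fin (ℓ+m)) K} :
    M ∈ Eblk K ℓ m ↔ ∀ i j : Fin (ℓ+m), (j:ℕ) < ℓ → ℓ ≤ (i:ℕ) → M i j = 0 := by
  show M.BlockTriangular (blkIdx ℓ m) ↔ _
  constructor
  · intro h i j hj hi
    exact h (show blkIdx ℓ m j < blkIdx ℓ m i by
      unfold blkIdx; rw [if_pos hj, if_neg (by omega)]; norm_num)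
  · intro h i j hij
    unfold blkIdx at hij
    split_ifs at hij with h1 h2
    · omega
    · exact h i j h1 (by omega)
    · omega
    · omega

lemma supDiag_mem_Eblk : supDiag K (ℓ+m) ∈ Eblk K ℓ m := by
  rw [mem_Eblk]
  intro i j hj hi
  simp only [supDiag, of_apply, ite_eq_right_iff]
  omega

lemma blkL_mul {X Y : Matrix (Fin (ℓ+m)) (Fin (ℓ+m)) K} (hY : Y ∈ Eblk K ℓ m) :
    blkL K ℓ m (X * Y) = blkL K ℓ m X * blkL K ℓ m Y := by
  ext i j
  simp only [blkL, of_apply, Matrix.mul_apply]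
  rw [Fin.sum_univ_add]
  have : ∀ t : Fin m, X (Fin.castAdd m i) (Fin.natAdd ℓ t) * Y (Fin.natAdd ℓ t) (Fin.castAdd m j)
      = 0 := fun t => by
    rw [mem_Eblk.1 hY _ _ (by simp) (by simp), mul_zero]
  simp [this]

lemma blkR_mul {X Y : Matrix (Fin (ℓ+m)) (Fin (ℓ+m)) K} (hX : X ∈ Eblk K ℓ m) :
    blkR K ℓ m (X * Y) = blkR K ℓ m X * blkR K ℓ m Y := by
  ext i j
  simp only [blkR, of_apply, Matrix.mul_apply]
  rw [Fin.sum_univ_add]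
  have : ∀ t : Fin ℓ, X (Fin.natAdd ℓ i) (Fin.castAdd m t) * Y (Fin.castAdd m t) (Fin.natAdd ℓ j)
      = 0 := fun t => by
    rw [mem_Eblk.1 hX _ _ (by simp) (by simp), zero_mul]
  simp [this]

lemma blkL_one : blkL K ℓ m 1 = 1 := by
  ext i j
  simp [blkL, Matrix.one_apply, Fin.ext_iff]

lemma blkR_one : blkR K ℓ m 1 = 1 := by
  ext i j
  simp [blkR, Matrix.one_apply, Fin.ext_iff]

lemma blkL_add (X Y : Matrix (Fin (ℓ+m)) (Fin (ℓ+m)) K) :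
    blkL K ℓ m (X + Y) = blkL K ℓ m X + blkL K ℓ m Y := by ext i j; simp [blkL]

lemma blkR_add (X Y : Matrix (Fin (ℓ+m)) (Fin (ℓ+m)) K) :
    blkR K ℓ m (X + Y) = blkR K ℓ m X + blkR K ℓ m Y := by ext i j; simp [blkR]

lemma blkL_sub (X Y : Matrix (Fin (ℓ+m)) (Fin (ℓ+m)) K) :
    blkL K ℓ m (X - Y) = blkL K ℓ m X - blkL K ℓ m Y := by ext i j; simp [blkL]

lemma blkR_sub (X Y : Matrix (Fin (ℓ+m)) (Fin (ℓ+m)) K) :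
    blkR K ℓ m (X - Y) = blkR K ℓ m X - blkR K ℓ m Y := by ext i j; simp [blkR]

lemma blkL_smul (c : K) (X : Matrix (Fin (ℓ+m)) (Fin (ℓ+m)) K) :
    blkL K ℓ m (c • X) = c • blkL K ℓ m X := by ext i j; simp [blkL]

lemma blkR_smul (c : K) (X : Matrix (Fin (ℓ+m)) (Fin (ℓ+m)) K) :
    blkR K ℓ m (c • X) = c • blkR K ℓ m X := by ext i j; simp [blkR]

lemma blkL_algebraMap (r : K) :
    blkL K ℓ m (algebraMap K _ r) = algebraMap K _ r := by
  ext i j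
  simp [blkL, Matrix.algebraMap_matrix_apply, Fin.ext_iff]

lemma blkR_algebraMap (r : K) :
    blkR K ℓ m (algebraMap K _ r) = algebraMap K _ r := by
  ext i j
  simp [blkR, Matrix.algebraMap_matrix_apply, Fin.ext_iff]

end Aux

section Aux2
variable {K : Type*} [Field K] {ℓ m : ℕ}

def cornerE (b : Matrix (Fin ℓ) (Fin m) K) : Matrix (Fin (ℓ+m)) (Fin (ℓ+m)) K :=
  Matrix.of fun i j =>
    if h : (i:ℕ) < ℓ ∧ ℓ ≤ (j:ℕ) then b ⟨i, h.1⟩ ⟨(j:ℕ) - ℓ, by have := j.isLt; omega⟩ else 0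

def blkUR (M : Matrix (Fin (ℓ+m)) (Fin (ℓ+m)) K) : Matrix (Fin ℓ) (Fin m) K :=
  Matrix.of fun i j => M (Fin.castAdd m i) (Fin.natAdd ℓ j)

lemma cornerE_cc (b : Matrix (Fin ℓ) (Fin m) K) (i j : Fin ℓ) :
    cornerE b (Fin.castAdd m i) (Fin.castAdd m j) = 0 := by
  simp only [cornerE, of_apply]
  rw [dif_neg]
  simp only [Fin.coe_castAdd, not_and, not_le]
  exact fun _ => j.isLt

lemma cornerE_cn (b : Matrix (Fin ℓ) (Fin m) K) (i : Fin ℓ) (j : Fin m) :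
    cornerE b (Fin.castAdd m i) (Fin.natAdd ℓ j) = b i j := by
  simp only [cornerE, of_apply]
  rw [dif_pos (by simp [i.isLt])]
  congr 1 <;> ext <;> simp

lemma cornerE_n (b : Matrix (Fin ℓ) (Fin m) K) (i : Fin m) (j : Fin (ℓ+m)) :
    cornerE b (Fin.natAdd ℓ i) j = 0 := by
  simp only [cornerE, of_apply]
  rw [dif_neg]
  simp only [Fin.coe_natAdd, not_and, not_le]
  omega

lemma cornerE_mem (b : Matrix (Fin ℓ) (Fin m) K) : cornerE b ∈ Eblk K ℓ m := by
  rw [mem_Eblk]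
  intro i j hj hi
  simp only [cornerE, of_apply]
  rw [dif_neg]
  omega

lemma cornerE_zero : cornerE (0 : Matrix (Fin ℓ) (Fin m) K) = 0 := by
  ext i j
  simp only [cornerE, of_apply, Matrix.zero_apply]
  split_ifs <;> simp

lemma cornerE_add (b c : Matrix (Fin ℓ) (Fin m) K) :
    cornerE (b + c) = cornerE b + cornerE c := by
  ext i j
  simp only [cornerE, of_apply, Matrix.add_apply]
  split_ifs <;> simp

lemma cornerE_smul (r : K) (b : Matrix (Fin ℓ) (Fin m) K) :
    cornerE (r • b) = r • cornerE b := by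
  ext i j
  simp only [cornerE, of_apply, Matrix.smul_apply]
  split_ifs <;> simp

lemma eq_cornerE {M : Matrix (Fin (ℓ+m)) (Fin (ℓ+m)) K} (hM : M ∈ Eblk K ℓ m)
    (hL : blkL K ℓ m M = 0) (hR : blkR K ℓ m M = 0) : M = cornerE (blkUR M) := by
  ext i j
  refine Fin.addCases (fun i => ?_) (fun i => ?_) i <;>
    refine Fin.addCases (fun j => ?_) (fun j => ?_) j
  · rw [cornerE_cc]
    exact congrFun (congrFun hL i) j
  · rw [cornerE_cn]; rfl
  · rw [cornerE_n]
    exact mem_Eblk.1 hM _ _ (by simp) (by simp)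
  · rw [cornerE_n]
    exact congrFun (congrFun hR i) j

lemma cornerE_mul {X : Matrix (Fin (ℓ+m)) (Fin (ℓ+m)) K} (hX : X ∈ Eblk K ℓ m)
    (b : Matrix (Fin ℓ) (Fin m) K) :
    cornerE b * X = cornerE (b * blkR K ℓ m X) := by
  ext i j
  refine Fin.addCases (fun i => ?_) (fun i => ?_) i
  · refine Fin.addCases (fun j => ?_) (fun j => ?_) j
    · rw [cornerE_cc, Matrix.mul_apply, Fin.sum_univ_add]
      have h1 : ∀ t : Fin ℓ, cornerE b (Fin.castAdd m i) (Fin.castAdd m t) *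
          X (Fin.castAdd m t) (Fin.castAdd m j) = 0 := fun t => by rw [cornerE_cc, zero_mul]
      have h2 : ∀ t : Fin m, cornerE b (Fin.castAdd m i) (Fin.natAdd ℓ t) *
          X (Fin.natAdd ℓ t) (Fin.castAdd m j) = 0 := fun t => by
        rw [mem_Eblk.1 hX _ _ (by simp) (by simp), mul_zero]
      simp [h1, h2]
    · rw [cornerE_cn, Matrix.mul_apply, Fin.sum_univ_add, Matrix.mul_apply]
      have h1 : ∀ t : Fin ℓ, cornerE b (Fin.castAdd m i) (Fin.castAdd m t) *
          X (Fin.castAdd m t) (Fin.natAdd ℓ j) = 0 := fun t => by rw [cornerE_cc, zero_mul]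
      simp only [h1, Finset.sum_const_zero, zero_add, cornerE_cn]
      rfl
  · rw [cornerE_n, Matrix.mul_apply]
    exact Finset.sum_eq_zero fun r _ => by rw [cornerE_n, zero_mul]

lemma mul_cornerE {X : Matrix (Fin (ℓ+m)) (Fin (ℓ+m)) K} (hX : X ∈ Eblk K ℓ m)
    (b : Matrix (Fin ℓ) (Fin m) K) :
    X * cornerE b = cornerE (blkL K ℓ m X * b) := by
  ext i j
  refine Fin.addCases (fun j => ?_) (fun j => ?_) j
  · have : ∀ r, X i r * cornerE b r (Fin.castAdd m j) = 0 := fun r => by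
      refine Fin.addCases (fun r => ?_) (fun r => ?_) r
      · rw [cornerE_cc, mul_zero]
      · rw [cornerE_n, mul_zero]
    rw [Matrix.mul_apply, Finset.sum_eq_zero fun r _ => this r]
    refine Fin.addCases (fun i => ?_) (fun i => ?_) i
    · rw [cornerE_cc]
    · rw [cornerE_n]
  · refine Fin.addCases (fun i => ?_) (fun i => ?_) i
    · rw [cornerE_cn, Matrix.mul_apply, Fin.sum_univ_add, Matrix.mul_apply]
      have h2 : ∀ t : Fin m, X (Fin.castAdd m i) (Fin.natAdd ℓ t) *
          cornerE b (Fin.natAdd ℓ t) (Fin.natAdd ℓ j) = 0 := fun t => by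
        rw [cornerE_n, mul_zero]
      simp only [h2, Finset.sum_const_zero, add_zero]
      refine Finset.sum_congr rfl fun t _ => ?_
      rw [cornerE_cn]
      rfl
    · rw [cornerE_n, Matrix.mul_apply]
      refine Finset.sum_eq_zero fun r _ => ?_
      refine Fin.addCases (fun r => ?_) (fun r => ?_) r
      · rw [mem_Eblk.1 hX _ _ (by simp) (by simp), zero_mul]
      · rw [cornerE_n, mul_zero]

end Aux2

section Aux3
variable {K : Type*} [Field K]

lemma stdBasisMatrix_mul_apply {p q : ℕ} (i r i0 : Fin p) (c : K)
    (b : Matrix (Fin p) (Fin q) K) (s : Fin q) :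
    (Matrix.single i i0 c * b) r s = if i = r then c * b i0 s else 0 := by
  simp only [Matrix.mul_apply, Matrix.single, Matrix.of_apply, ite_mul, zero_mul, ite_and]
  by_cases h : i = r
  · simp [h, Finset.sum_ite_eq]
  · simp [h]

lemma mul_stdBasisMatrix_apply {p q : ℕ} (j s j0 : Fin q) (c : K)
    (b : Matrix (Fin p) (Fin q) K) (r : Fin p) :
    (b * Matrix.single j0 j c) r s = if j = s then b r j0 * c else 0 := by
  simp only [Matrix.mul_apply, Matrix.single, Matrix.of_apply, mul_ite, mul_zero, ite_and]
  by_cases h : j = s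
  · simp [h, Finset.sum_ite_eq']
  · simp [h]

lemma stdBasis_conj {p q : ℕ} (b : Matrix (Fin p) (Fin q) K) (i0 : Fin p) (j0 : Fin q)
    (i : Fin p) (j : Fin q) (c : K) :
    Matrix.single i i0 c * b * Matrix.single j0 j (1:K) =
      Matrix.single i j (c * b i0 j0) := by
  ext r s
  rw [mul_stdBasisMatrix_apply]
  by_cases hs : j = s
  · rw [if_pos hs, stdBasisMatrix_mul_apply]
    by_cases hr : i = r <;> simp [Matrix.single, hr, hs]
  · rw [if_neg hs]
    simp [Matrix.single, hs]

lemma submodule_matrix_eq_top {p q : ℕ} (S : Submodule K (Matrix (Fin p) (Fin q) K))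
    (hL : ∀ (a : Matrix (Fin p) (Fin p) K), ∀ b ∈ S, a * b ∈ S)
    (hR : ∀ (c : Matrix (Fin q) (Fin q) K), ∀ b ∈ S, b * c ∈ S)
    (hne : S ≠ ⊥) : S = ⊤ := by
  obtain ⟨b, hbS, hb0⟩ := Submodule.exists_mem_ne_zero_of_ne_bot hne
  have : ∃ i0 j0, b i0 j0 ≠ 0 := by
    by_contra h
    push_neg at h
    exact hb0 (by ext i j; simp [h i j])
  obtain ⟨i0, j0, hb⟩ := this
  have key : ∀ (i : Fin p) (j : Fin q) (c : K), Matrix.single i j c ∈ S := by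
    intro i j c
    have := hR (Matrix.single j0 j (1:K)) _
      (hL (Matrix.single i i0 (c * (b i0 j0)⁻¹)) b hbS)
    rwa [stdBasis_conj, mul_assoc, inv_mul_cancel₀ hb, mul_one] at this
  rw [eq_top_iff]
  intro u _
  rw [Matrix.matrix_eq_sum_single u]
  exact Submodule.sum_mem _ fun i _ => Submodule.sum_mem _ fun j _ => key i j _

end Aux3

section Aux4
variable {K : Type*} [Field K]

/-- the left ideal of matrices supported on column `j`. -/
def colIdeal (p : ℕ) (j : Fin p) :
    Submodule (Matrix (Fin p) (Fin p) K) (Matrix (Fin p) (Fin p) K) where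
  carrier := { M | ∀ i j', j' ≠ j → M i j' = 0 }
  add_mem' := fun {a b} ha hb i j' h => by rw [Matrix.add_apply, ha i j' h, hb i j' h, add_zero]
  zero_mem' := fun i j' _ => rfl
  smul_mem' := fun A M hM i j' h => by
    show (A * M) i j' = 0
    rw [Matrix.mul_apply]
    exact Finset.sum_eq_zero fun r _ => by rw [hM r j' h, mul_zero]

lemma colIdeal_simple (p : ℕ) (hp : 0 < p) (j : Fin p) :
    IsSimpleModule (Matrix (Fin p) (Fin p) K) (colIdeal (K := K) p j) := by
  haveI hnt : Nontrivial (colIdeal (K := K) p j) := by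
    refine ⟨⟨Matrix.single ⟨0, hp⟩ j 1, fun i j' h => by
        simp [Matrix.single, Ne.symm h]⟩, 0, ?_⟩
    intro hEq
    have := congrArg (fun x => x.1 ⟨0, hp⟩ j) hEq
    simp [Matrix.single] at this
  refine (isSimpleModule_iff _ _).2 { eq_bot_or_eq_top := ?_ }
  intro N
  rcases eq_or_ne N ⊥ with h | h
  · exact Or.inl h
  · right
    obtain ⟨⟨X, hXcol⟩, hXN, hX0⟩ := Submodule.exists_mem_ne_zero_of_ne_bot h
    have hXne : X ≠ 0 := fun h0 => hX0 (Subtype.ext h0)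
    have : ∃ i0, X i0 j ≠ 0 := by
      by_contra hc
      push_neg at hc
      apply hXne
      ext r s
      rcases eq_or_ne s j with rfl | hs
      · simp [hc r]
      · simp [hXcol r s hs]
    obtain ⟨i0, hi0⟩ := this
    rw [eq_top_iff]
    rintro ⟨Y, hYcol⟩ _
    have : (Matrix.of fun i r => if r = i0 then (X i0 j)⁻¹ * Y i j else 0 :
        Matrix (Fin p) (Fin p) K) • (⟨X, hXcol⟩ : colIdeal (K := K) p j) = ⟨Y, hYcol⟩ := by
      ext i s
      show ((Matrix.of fun i r => if r = i0 then (X i0 j)⁻¹ * Y i j else 0) * X) i s = Y i s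
      rw [Matrix.mul_apply]
      rw [Finset.sum_eq_single i0]
      · rcases eq_or_ne s j with rfl | hs
        · simp [mul_comm, mul_assoc, inv_mul_cancel₀ hi0]
          field_simp
        · simp [hXcol i0 s hs, hYcol i s hs]
      · intro t _ ht
        simp [ht]
      · simp
    rw [← this]
    exact Submodule.smul_mem _ _ hXN

lemma matrix_isSemisimpleRing (p : ℕ) (hp : 0 < p) :
    IsSemisimpleRing (Matrix (Fin p) (Fin p) K) := by
  refine isSemisimpleModule_of_isSemisimpleModule_submodule'
    (p := fun j : Fin p => colIdeal (K := K) p j) (fun j => ?_) ?_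
  · haveI := colIdeal_simple (K := K) p hp j
    infer_instance
  · rw [eq_top_iff]
    intro M _
    have hM : M = ∑ j : Fin p, (Matrix.of fun i s => if s = j then M i s else 0 :
        Matrix (Fin p) (Fin p) K) := by
      ext i s
      rw [Matrix.sum_apply]
      simp [Finset.sum_ite_eq]
    rw [hM]
    refine Submodule.sum_mem _ fun j _ => ?_
    refine Submodule.mem_iSup_of_mem j ?_
    intro i s' hs'
    exact if_neg hs'

/-- Semisimple rings are von Neumann regular. -/
lemma exists_mul_mul_eq_self {R : Type*} [Ring R] [IsSemisimpleRing R] (a : R) :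
    ∃ x : R, a * x * a = a := by
  obtain ⟨C, hC⟩ := exists_isCompl (Submodule.span R {a})
  set π := Submodule.linearProjOfIsCompl _ _ hC
  have ha : a ∈ Submodule.span R {a} := Submodule.mem_span_singleton_self a
  have h1 : π a = ⟨a, ha⟩ := Submodule.linearProjOfIsCompl_apply_left hC ⟨a, ha⟩
  have h2 : π a = a • π 1 := by
    have := map_smul π a (1:R)
    rwa [smul_eq_mul, mul_one] at this
  have h3 : a * (π 1 : R) = a := by
    have := congrArg Subtype.val (h2.symm.trans h1)
    simpa [smul_eq_mul] using this
  obtain ⟨r, hr⟩ := Submodule.mem_span_singleton.1 (π 1).2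
  exact ⟨r, by rw [mul_assoc, show r * a = (π 1 : R) from by simpa [smul_eq_mul] using hr, h3]⟩

end Aux4

section Aux5
variable {K : Type*} [Field K] {ℓ m : ℕ}

lemma supDiag_mul_apply {N : ℕ} (W : Matrix (Fin N) (Fin N) K) (i i' j : Fin N)
    (h : (i:ℕ) + 1 = (i':ℕ)) : (supDiag K N * W) i j = W i' j := by
  rw [Matrix.mul_apply]
  rw [Finset.sum_eq_single i']
  · simp [supDiag, h]
  · intro t _ ht
    have : ¬ ((i:ℕ) + 1 = (t:ℕ)) := fun hc => ht (by rw [Fin.ext_iff]; omega)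
    simp [supDiag, this]
  · simp

lemma mul_supDiag_apply {N : ℕ} (W : Matrix (Fin N) (Fin N) K) (i j j' : Fin N)
    (h : (j':ℕ) + 1 = (j:ℕ)) : (W * supDiag K N) i j = W i j' := by
  rw [Matrix.mul_apply]
  rw [Finset.sum_eq_single j']
  · simp [supDiag, h]
  · intro t _ ht
    have : ¬ ((t:ℕ) + 1 = (j:ℕ)) := fun hc => ht (by rw [Fin.ext_iff]; omega)
    simp [supDiag, this]
  · simp

/-- block diagonal matrix inside `M_{ℓ+m}`. -/
def blockD (U : Matrix (Fin ℓ) (Fin ℓ) K) (V : Matrix (Fin m) (Fin m) K) :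
    Matrix (Fin (ℓ+m)) (Fin (ℓ+m)) K :=
  Matrix.of fun i j =>
    if h : (i:ℕ) < ℓ then
      (if h' : (j:ℕ) < ℓ then U ⟨i, h⟩ ⟨j, h'⟩ else 0)
    else
      (if h' : (j:ℕ) < ℓ then 0 else
        V ⟨(i:ℕ) - ℓ, by have := i.isLt; omega⟩ ⟨(j:ℕ) - ℓ, by have := j.isLt; omega⟩)

lemma blockD_cc (U : Matrix (Fin ℓ) (Fin ℓ) K) (V : Matrix (Fin m) (Fin m) K) (i j : Fin ℓ) :
    blockD U V (Fin.castAdd m i) (Fin.castAdd m j) = U i j := by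
  simp only [blockD, of_apply, Fin.coe_castAdd]
  rw [dif_pos i.isLt, dif_pos j.isLt]

lemma blockD_nn (U : Matrix (Fin ℓ) (Fin ℓ) K) (V : Matrix (Fin m) (Fin m) K) (i j : Fin m) :
    blockD U V (Fin.natAdd ℓ i) (Fin.natAdd ℓ j) = V i j := by
  simp only [blockD, of_apply, Fin.coe_natAdd]
  rw [dif_neg (by omega), dif_neg (by omega)]
  congr 1 <;> ext <;> simp

lemma blockD_cn (U : Matrix (Fin ℓ) (Fin ℓ) K) (V : Matrix (Fin m) (Fin m) K)
    (i : Fin ℓ) (j : Fin m) : blockD U V (Fin.castAdd m i) (Fin.natAdd ℓ j) = 0 := by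
  simp only [blockD, of_apply, Fin.coe_castAdd, Fin.coe_natAdd]
  rw [dif_pos i.isLt, dif_neg (by omega)]

lemma blockD_nc (U : Matrix (Fin ℓ) (Fin ℓ) K) (V : Matrix (Fin m) (Fin m) K)
    (i : Fin m) (j : Fin ℓ) : blockD U V (Fin.natAdd ℓ i) (Fin.castAdd m j) = 0 := by
  simp only [blockD, of_apply, Fin.coe_castAdd, Fin.coe_natAdd]
  rw [dif_neg (by omega), dif_pos j.isLt]

lemma blockD_mem (U : Matrix (Fin ℓ) (Fin ℓ) K) (V : Matrix (Fin m) (Fin m) K) :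
    blockD U V ∈ Eblk K ℓ m := by
  rw [mem_Eblk]
  intro i j hj hi
  simp only [blockD, of_apply]
  rw [dif_neg (by omega), dif_pos hj]

lemma blockD_mul (U U' : Matrix (Fin ℓ) (Fin ℓ) K) (V V' : Matrix (Fin m) (Fin m) K) :
    blockD U V * blockD U' V' = blockD (U * U') (V * V') := by
  ext i j
  refine Fin.addCases (fun i => ?_) (fun i => ?_) i <;>
    refine Fin.addCases (fun j => ?_) (fun j => ?_) j <;>
      rw [Matrix.mul_apply, Fin.sum_univ_add]
  · rw [blockD_cc, Matrix.mul_apply]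
    simp [blockD_cc, blockD_cn, blockD_nc]
  · rw [blockD_cn]
    simp [blockD_cc, blockD_cn, blockD_nn]
  · rw [blockD_nc]
    simp [blockD_nc, blockD_cc, blockD_nn]
  · rw [blockD_nn, Matrix.mul_apply]
    simp [blockD_nc, blockD_cn, blockD_nn]

lemma blockD_one : blockD (1 : Matrix (Fin ℓ) (Fin ℓ) K) (1 : Matrix (Fin m) (Fin m) K) = 1 := by
  ext i j
  refine Fin.addCases (fun i => ?_) (fun i => ?_) i <;>
    refine Fin.addCases (fun j => ?_) (fun j => ?_) j
  · rw [blockD_cc]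
    simp [Matrix.one_apply, Fin.ext_iff]
  · rw [blockD_cn, Matrix.one_apply, if_neg (by rw [Fin.ext_iff]; simp; omega)]
  · rw [blockD_nc, Matrix.one_apply, if_neg (by rw [Fin.ext_iff]; simp; omega)]
  · rw [blockD_nn]
    simp [Matrix.one_apply, Fin.ext_iff]

lemma blkL_blockD (U : Matrix (Fin ℓ) (Fin ℓ) K) (V : Matrix (Fin m) (Fin m) K) :
    blkL K ℓ m (blockD U V) = U := by
  ext i j; exact blockD_cc U V i j

lemma blkR_blockD (U : Matrix (Fin ℓ) (Fin ℓ) K) (V : Matrix (Fin m) (Fin m) K) :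
    blkR K ℓ m (blockD U V) = V := by
  ext i j; exact blockD_nn U V i j

end Aux5

section Main
variable {K : Type*} [Field K] {ℓ m : ℕ}

lemma blkL_zero : blkL K ℓ m 0 = 0 := by ext i j; simp [blkL]
lemma blkR_zero : blkR K ℓ m 0 = 0 := by ext i j; simp [blkR]

lemma backward_dir (hℓ : 0 < ℓ) (hm : 0 < m)
    (Λ : Subalgebra K (Matrix (Fin (ℓ + m)) (Fin (ℓ + m)) K))
    (hΛE : ∀ X ∈ Λ, X ∈ Eblk K ℓ m)
    (Q : Matrix (Fin (ℓ + m)) (Fin (ℓ + m)) K) (hQ : IsUnit Q)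
    (hQE : ∀ M ∈ Eblk K ℓ m, Q * M * Q⁻¹ ∈ Eblk K ℓ m)
    (M : Matrix (Fin (ℓ + m)) (Fin (ℓ + m)) K) (hMΛ : M ∈ Λ)
    (hQM : Q * M * Q⁻¹ = supDiag K (ℓ + m)) :
    ¬ IsSemisimpleRing Λ := by
  intro hss
  have hdet : IsUnit Q.det := (Matrix.isUnit_iff_isUnit_det Q).1 hQ
  have hQQ : Q * Q⁻¹ = 1 := Matrix.mul_nonsing_inv Q hdet
  have hQQ' : Q⁻¹ * Q = 1 := Matrix.nonsing_inv_mul Q hdet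
  have hcancel : ∀ W : Matrix (Fin (ℓ + m)) (Fin (ℓ + m)) K, Q⁻¹ * (Q * W) = W := fun W => by
    rw [← Matrix.mul_assoc, hQQ', one_mul]
  obtain ⟨x, hx⟩ := exists_mul_mul_eq_self (⟨M, hMΛ⟩ : Λ)
  have hMxM : M * (x : Matrix (Fin (ℓ + m)) (Fin (ℓ + m)) K) * M = M := congrArg Subtype.val hx
  set Z := Q * (x : Matrix (Fin (ℓ + m)) (Fin (ℓ + m)) K) * Q⁻¹ with hZ
  have hZE : Z ∈ Eblk K ℓ m := hQE _ (hΛE _ x.2)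
  have key : supDiag K (ℓ + m) * Z * supDiag K (ℓ + m) = supDiag K (ℓ + m) := by
    rw [← hQM, hZ]
    have h1 : M * ((x : Matrix (Fin (ℓ + m)) (Fin (ℓ + m)) K) * (M * Q⁻¹)) = M * Q⁻¹ := by
      rw [← Matrix.mul_assoc, ← Matrix.mul_assoc, hMxM]
    simp only [Matrix.mul_assoc, hcancel]
    rw [h1]
  have hi : (ℓ - 1 : ℕ) < ℓ + m := by omega
  have hj : ℓ < ℓ + m := by omega
  have hL : (supDiag K (ℓ + m) * Z * supDiag K (ℓ + m)) ⟨ℓ - 1, hi⟩ ⟨ℓ, hj⟩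
      = Z ⟨ℓ, hj⟩ ⟨ℓ - 1, hi⟩ := by
    rw [mul_supDiag_apply _ _ _ ⟨ℓ - 1, hi⟩ (show ℓ - 1 + 1 = ℓ by omega),
      supDiag_mul_apply _ _ ⟨ℓ, hj⟩ _ (show ℓ - 1 + 1 = ℓ by omega)]
  have hZ0 : Z ⟨ℓ, hj⟩ ⟨ℓ - 1, hi⟩ = 0 :=
    mem_Eblk.1 hZE _ _ (show ℓ - 1 < ℓ by omega) (le_refl ℓ)
  rw [key] at hL
  have : (supDiag K (ℓ + m)) ⟨ℓ - 1, hi⟩ ⟨ℓ, hj⟩ = 1 := by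
    simp only [supDiag, Matrix.of_apply]
    rw [if_pos (show ℓ - 1 + 1 = ℓ by omega)]
  rw [this, hZ0] at hL
  exact one_ne_zero hL

end Main

section Forward2
variable {K : Type*} [Field K] {ℓ m : ℕ}

lemma stdBasisMatrix_mulVec {p : ℕ} (r t : Fin p) (c : K) (v : Fin p → K) :
    (Matrix.single r t c).mulVec v = Pi.single r (c * v t) := by
  funext u
  rw [Matrix.mulVec, dotProduct, Pi.single_apply]
  by_cases h : u = r
  · subst h
    rw [if_pos rfl, Finset.sum_eq_single t]
    · simp [Matrix.single]
    · intro s _ hs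
      simp [Matrix.single, Ne.symm hs]
    · simp
  · rw [if_neg h]
    refine Finset.sum_eq_zero fun s _ => ?_
    simp [Matrix.single, Ne.symm h]

end Forward2

section Forward
variable {K : Type*} [Field K] {ℓ m : ℕ}

set_option maxHeartbeats 2000000 in
lemma forward_dir (hℓ : 0 < ℓ) (hm : 0 < m)
    (Λ : Subalgebra K (Matrix (Fin (ℓ + m)) (Fin (ℓ + m)) K))
    (hΛE : ∀ X ∈ Λ, X ∈ Eblk K ℓ m)
    (surjL : ∀ a : Matrix (Fin ℓ) (Fin ℓ) K, ∃ X ∈ Λ, blkL K ℓ m X = a)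
    (surjR : ∀ c : Matrix (Fin m) (Fin m) K, ∃ X ∈ Λ, blkR K ℓ m X = c)
    (hns : ¬ IsSemisimpleRing Λ) :
    ∃ Q : Matrix (Fin (ℓ + m)) (Fin (ℓ + m)) K, IsUnit Q ∧
      (∀ M ∈ Eblk K ℓ m, Q * M * Q⁻¹ ∈ Eblk K ℓ m) ∧
      supDiag K (ℓ + m) ∈
        (fun M => Q * M * Q⁻¹) '' (Λ : Set (Matrix (Fin (ℓ + m)) (Fin (ℓ + m)) K)) := by
  classical
  choose F hF1 hF2 using surjL
  choose G hG1 hG2 using surjR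
  -- the ideal I2
  set I2 : Submodule K (Matrix (Fin m) (Fin m) K) :=
    { carrier := { c | ∃ X ∈ Λ, blkL K ℓ m X = 0 ∧ blkR K ℓ m X = c }
      add_mem' := by
        rintro c d ⟨X, hX, hX0, rfl⟩ ⟨Y, hY, hY0, rfl⟩
        exact ⟨X + Y, add_mem hX hY, by rw [blkL_add, hX0, hY0, add_zero], blkR_add X Y⟩
      zero_mem' := ⟨0, zero_mem _, blkL_zero, blkR_zero⟩
      smul_mem' := by
        rintro r c ⟨X, hX, hX0, rfl⟩
        exact ⟨r • X, SMulMemClass.smul_mem r hX, by rw [blkL_smul, hX0, smul_zero],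
          blkR_smul r X⟩ } with hI2def
  have hI2L : ∀ (d : Matrix (Fin m) (Fin m) K), ∀ c ∈ I2, d * c ∈ I2 := by
    rintro d c ⟨X, hX, hX0, rfl⟩
    refine ⟨G d * X, mul_mem (hG1 d) hX, ?_, ?_⟩
    · rw [blkL_mul (hΛE X hX), hX0, mul_zero]
    · rw [blkR_mul (hΛE _ (hG1 d)), hG2]
  have hI2R : ∀ (d : Matrix (Fin m) (Fin m) K), ∀ c ∈ I2, c * d ∈ I2 := by
    rintro d c ⟨X, hX, hX0, rfl⟩
    refine ⟨X * G d, mul_mem hX (hG1 d), ?_, ?_⟩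
    · rw [blkL_mul (hΛE _ (hG1 d)), hX0, zero_mul]
    · rw [blkR_mul (hΛE X hX), hG2]
  -- the corner module J
  set J : Submodule K (Matrix (Fin ℓ) (Fin m) K) :=
    { carrier := { b | cornerE b ∈ Λ }
      add_mem' := by
        intro a b ha hb
        show cornerE (a + b) ∈ Λ
        rw [cornerE_add]
        exact add_mem ha hb
      zero_mem' := by
        show cornerE (0 : Matrix (Fin ℓ) (Fin m) K) ∈ Λ
        rw [cornerE_zero]; exact zero_mem _
      smul_mem' := by
        intro r b hb
        show cornerE (r • b) ∈ Λ
        rw [cornerE_smul]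
        exact SMulMemClass.smul_mem r hb } with hJdef
  have hJL : ∀ (a : Matrix (Fin ℓ) (Fin ℓ) K), ∀ b ∈ J, a * b ∈ J := by
    intro a b hb
    show cornerE (a * b) ∈ Λ
    rw [← hF2 a, ← mul_cornerE (hΛE _ (hF1 a))]
    exact mul_mem (hF1 a) hb
  have hJR : ∀ (c : Matrix (Fin m) (Fin m) K), ∀ b ∈ J, b * c ∈ J := by
    intro c b hb
    show cornerE (b * c) ∈ Λ
    rw [← hG2 c, ← cornerE_mul (hΛE _ (hG1 c))]
    exact mul_mem hb (hG1 c)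
  have hzero : ∀ X ∈ Λ, blkL K ℓ m X = 0 → blkR K ℓ m X = 0 → blkUR X ∈ J ∧
      X = cornerE (blkUR X) := fun X hX h1 h2 => by
    have hXE := hΛE X hX
    have heq := eq_cornerE hXE h1 h2
    exact ⟨show cornerE (blkUR X) ∈ Λ from heq ▸ hX, heq⟩
  -- J is nonzero
  have hJne : J ≠ ⊥ := by
    intro hbot
    apply hns
    have hzero' : ∀ X ∈ Λ, blkL K ℓ m X = 0 → blkR K ℓ m X = 0 → X = 0 := by
      intro X hX h1 h2
      obtain ⟨hmem, heq⟩ := hzero X hX h1 h2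
      rw [hbot, Submodule.mem_bot] at hmem
      rw [heq, hmem, cornerE_zero]
    by_cases hI2bot : I2 = ⊥
    · -- Λ ≃ M_ℓ
      have hLinj : ∀ X ∈ Λ, blkL K ℓ m X = 0 → X = 0 := by
        intro X hX h0
        refine hzero' X hX h0 ?_
        have : blkR K ℓ m X ∈ I2 := ⟨X, hX, h0, rfl⟩
        rwa [hI2bot, Submodule.mem_bot] at this
      let f : Λ →+* Matrix (Fin ℓ) (Fin ℓ) K :=
        { toFun := fun X => blkL K ℓ m X.1
          map_one' := blkL_one
          map_mul' := fun X Y => blkL_mul (hΛE _ Y.2)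
          map_zero' := blkL_zero
          map_add' := fun X Y => blkL_add _ _ }
      have hbij : Function.Bijective f := by
        constructor
        · intro X Y h
          have h0 : blkL K ℓ m (X.1 - Y.1) = 0 := by
            rw [blkL_sub, sub_eq_zero]; exact h
          have := hLinj _ (sub_mem X.2 Y.2) h0
          exact Subtype.ext (by rwa [sub_eq_zero] at this)
        · intro a
          exact ⟨⟨F a, hF1 a⟩, hF2 a⟩
      haveI := matrix_isSemisimpleRing (K := K) ℓ hℓ
      exact (RingEquiv.ofBijective f hbij).symm.isSemisimpleRing
    · -- I2 = ⊤, Λ ≃ M_ℓ × M_m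
      have hI2top := submodule_matrix_eq_top I2 hI2L hI2R hI2bot
      have hI1 : ∀ a : Matrix (Fin ℓ) (Fin ℓ) K, ∃ X ∈ Λ,
          blkL K ℓ m X = a ∧ blkR K ℓ m X = 0 := by
        intro a
        obtain ⟨Y, hY, hY0, hYc⟩ : blkR K ℓ m (F a) ∈ I2 := hI2top ▸ Submodule.mem_top
        exact ⟨F a - Y, sub_mem (hF1 a) hY, by rw [blkL_sub, hF2, hY0, sub_zero],
          by rw [blkR_sub, hYc, sub_self]⟩
      have hpair : ∀ (a : Matrix (Fin ℓ) (Fin ℓ) K) (c : Matrix (Fin m) (Fin m) K),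
          ∃ X ∈ Λ, blkL K ℓ m X = a ∧ blkR K ℓ m X = c := by
        intro a c
        obtain ⟨X, hX, hXa, hX0⟩ := hI1 a
        obtain ⟨Y, hY, hY0, hYc⟩ : c ∈ I2 := hI2top ▸ Submodule.mem_top
        exact ⟨X + Y, add_mem hX hY, by rw [blkL_add, hXa, hY0, add_zero],
          by rw [blkR_add, hX0, hYc, zero_add]⟩
      let f : Λ →+* Matrix (Fin ℓ) (Fin ℓ) K × Matrix (Fin m) (Fin m) K :=
        { toFun := fun X => (blkL K ℓ m X.1, blkR K ℓ m X.1)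
          map_one' := by rw [Prod.mk.injEq]; exact ⟨blkL_one, blkR_one⟩
          map_mul' := fun X Y => by
            rw [Prod.mk_mul_mk, Prod.mk.injEq]
            exact ⟨blkL_mul (hΛE _ Y.2), blkR_mul (hΛE _ X.2)⟩
          map_zero' := by rw [Prod.mk.injEq]; exact ⟨blkL_zero, blkR_zero⟩
          map_add' := fun X Y => by
            rw [Prod.mk_add_mk, Prod.mk.injEq]
            exact ⟨blkL_add _ _, blkR_add _ _⟩ }
      have hbij : Function.Bijective f := by
        constructor
        · intro X Y h
          rw [Prod.mk.injEq] at h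
          have h1 : blkL K ℓ m (X.1 - Y.1) = 0 := by rw [blkL_sub, sub_eq_zero]; exact h.1
          have h2 : blkR K ℓ m (X.1 - Y.1) = 0 := by rw [blkR_sub, sub_eq_zero]; exact h.2
          have := hzero' _ (sub_mem X.2 Y.2) h1 h2
          exact Subtype.ext (by rwa [sub_eq_zero] at this)
        · rintro ⟨a, c⟩
          obtain ⟨X, hX, h1, h2⟩ := hpair a c
          exact ⟨⟨X, hX⟩, by rw [Prod.mk.injEq]; exact ⟨h1, h2⟩⟩
      haveI := matrix_isSemisimpleRing (K := K) ℓ hℓ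
      haveI := matrix_isSemisimpleRing (K := K) m hm
      exact (RingEquiv.ofBijective f hbij).symm.isSemisimpleRing
  have hJtop := submodule_matrix_eq_top J hJL hJR hJne
  have hT : ∀ b : Matrix (Fin ℓ) (Fin m) K, cornerE b ∈ Λ := fun b =>
    show b ∈ J from hJtop ▸ Submodule.mem_top
  by_cases hI2bot : I2 = ⊥
  · -- graph case
    have hRel : ∀ X ∈ Λ, blkR K ℓ m X = blkR K ℓ m (F (blkL K ℓ m X)) := by
      intro X hX
      have hmem : blkR K ℓ m (X - F (blkL K ℓ m X)) ∈ I2 :=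
        ⟨_, sub_mem hX (hF1 _), by rw [blkL_sub, hF2, sub_self], rfl⟩
      rw [hI2bot, Submodule.mem_bot, blkR_sub, sub_eq_zero] at hmem
      exact hmem
    let φ : Matrix (Fin ℓ) (Fin ℓ) K →ₗ[K] Matrix (Fin m) (Fin m) K :=
      { toFun := fun a => blkR K ℓ m (F a)
        map_add' := fun a b => by
          have h1 := hRel (F a + F b) (add_mem (hF1 a) (hF1 b))
          rw [blkL_add, hF2, hF2, blkR_add] at h1
          exact h1.symm
        map_smul' := fun r a => by
          have h1 := hRel (r • F a) (SMulMemClass.smul_mem r (hF1 a))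
          rw [blkL_smul, hF2, blkR_smul] at h1
          exact h1.symm }
    have hφ_apply : ∀ a, φ a = blkR K ℓ m (F a) := fun a => rfl
    have hφ_mul : ∀ a b, φ (a * b) = φ a * φ b := by
      intro a b
      have h1 := hRel (F a * F b) (mul_mem (hF1 a) (hF1 b))
      rw [blkL_mul (hΛE _ (hF1 b)), hF2, hF2, blkR_mul (hΛE _ (hF1 a))] at h1
      exact h1.symm
    have hφ_one : φ 1 = 1 := by
      have h1 := hRel 1 (one_mem Λ)
      rw [blkL_one, blkR_one] at h1
      exact h1.symm
    have hφ_inj0 : ∀ a, φ a = 0 → a = 0 := by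
      intro a ha
      set I1 : Submodule K (Matrix (Fin ℓ) (Fin ℓ) K) :=
        { carrier := { a | ∃ X ∈ Λ, blkL K ℓ m X = a ∧ blkR K ℓ m X = 0 }
          add_mem' := by
            rintro x y ⟨X, hX, rfl, hX0⟩ ⟨Y, hY, rfl, hY0⟩
            exact ⟨X + Y, add_mem hX hY, blkL_add X Y, by rw [blkR_add, hX0, hY0, add_zero]⟩
          zero_mem' := ⟨0, zero_mem _, blkL_zero, blkR_zero⟩
          smul_mem' := by
            rintro r x ⟨X, hX, rfl, hX0⟩
            exact ⟨r • X, SMulMemClass.smul_mem r hX, blkL_smul r X,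
              by rw [blkR_smul, hX0, smul_zero]⟩ } with hI1def
      have hI1L : ∀ (d : Matrix (Fin ℓ) (Fin ℓ) K), ∀ x ∈ I1, d * x ∈ I1 := by
        rintro d x ⟨X, hX, rfl, hX0⟩
        refine ⟨F d * X, mul_mem (hF1 d) hX, ?_, ?_⟩
        · rw [blkL_mul (hΛE X hX), hF2]
        · rw [blkR_mul (hΛE _ (hF1 d)), hX0, mul_zero]
      have hI1R : ∀ (d : Matrix (Fin ℓ) (Fin ℓ) K), ∀ x ∈ I1, x * d ∈ I1 := by
        rintro d x ⟨X, hX, rfl, hX0⟩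
        refine ⟨X * F d, mul_mem hX (hF1 d), ?_, ?_⟩
        · rw [blkL_mul (hΛE _ (hF1 d)), hF2]
        · rw [blkR_mul (hΛE X hX), hX0, zero_mul]
      by_cases hI1bot : I1 = ⊥
      · have : a ∈ I1 := ⟨F a, hF1 a, hF2 a, ha⟩
        rwa [hI1bot, Submodule.mem_bot] at this
      · exfalso
        have hI1top := submodule_matrix_eq_top I1 hI1L hI1R hI1bot
        obtain ⟨X, hX, hX1, hX0⟩ : (1 : Matrix (Fin ℓ) (Fin ℓ) K) ∈ I1 :=
          hI1top ▸ Submodule.mem_top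
        have hr := hRel X hX
        rw [hX1, hX0] at hr
        have h01 : (0 : Matrix (Fin m) (Fin m) K) = 1 := hr.trans hφ_one
        have := congrFun (congrFun h01 ⟨0, hm⟩) ⟨0, hm⟩
        rw [Matrix.one_apply_eq, Matrix.zero_apply] at this
        exact zero_ne_one this
    have hφ_inj : Function.Injective φ := by
      intro a b h
      have h0 : φ (a - b) = 0 := by rw [map_sub, h, sub_self]
      have := hφ_inj0 _ h0
      rwa [sub_eq_zero] at this
    have hφ_surj : Function.Surjective φ := by
      intro c
      refine ⟨blkL K ℓ m (G c), ?_⟩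
      have := hRel (G c) (hG1 c)
      rw [hG2] at this
      exact this.symm
    have hfr := LinearEquiv.finrank_eq (LinearEquiv.ofBijective φ ⟨hφ_inj, hφ_surj⟩)
    rw [Module.finrank_matrix, Module.finrank_matrix] at hfr
    simp only [Fintype.card_fin, Module.finrank_self, mul_one] at hfr
    have hlm : ℓ = m := by rwa [Nat.mul_self_inj] at hfr
    subst hlm
    -- Skolem–Noether: φ is conjugation by an invertible P
    have hE00 : φ (Matrix.single (⟨0, hℓ⟩ : Fin ℓ) ⟨0, hℓ⟩ (1:K)) ≠ 0 := by
      intro h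
      have h2 := hφ_inj0 _ h
      have h3 := congrFun (congrFun h2 ⟨0, hℓ⟩) ⟨0, hℓ⟩
      simp [Matrix.single] at h3
    obtain ⟨i1, j1, hw⟩ : ∃ i1 j1,
        φ (Matrix.single (⟨0, hℓ⟩ : Fin ℓ) ⟨0, hℓ⟩ (1:K)) i1 j1 ≠ 0 := by
      by_contra hc
      push_neg at hc
      exact hE00 (by ext i j; simp [hc i j])
    set z0 : Fin ℓ := ⟨0, hℓ⟩ with hz0
    set P : Matrix (Fin ℓ) (Fin ℓ) K :=
      Matrix.of fun i j => φ (Matrix.single j z0 (1:K)) i j1 with hPdef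
    have hPapp : ∀ i j, P i j = φ (Matrix.single j z0 (1:K)) i j1 := fun i j => rfl
    have hPbasis : ∀ r s : Fin ℓ, φ (Matrix.single r s (1:K)) * P
        = P * Matrix.single r s (1:K) := by
      intro r s
      ext i j
      rw [mul_stdBasisMatrix_apply]
      have hL : (φ (Matrix.single r s (1:K)) * P) i j
          = φ (Matrix.single r s (1:K) * Matrix.single j z0 (1:K)) i j1 := by
        rw [hφ_mul, Matrix.mul_apply, Matrix.mul_apply]
        exact Finset.sum_congr rfl fun t _ => by rw [hPapp]
      rw [hL]
      by_cases hsj : s = j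
      · subst hsj
        rw [Matrix.single_mul_single_same, one_mul, if_pos rfl, mul_one, hPapp]
      · rw [show Matrix.single r s (1:K) * Matrix.single j z0 (1:K) = 0 from
          Matrix.single_mul_single_of_ne (c := (1:K)) r s j hsj (1:K), map_zero,
          if_neg hsj]
        simp
    have hPcomm : ∀ a : Matrix (Fin ℓ) (Fin ℓ) K, φ a * P = P * a := by
      intro a
      have ha : a = ∑ r : Fin ℓ, ∑ s : Fin ℓ, (a r s) • Matrix.single r s (1:K) := by
        conv_lhs => rw [Matrix.matrix_eq_sum_single a]
        refine Finset.sum_congr rfl fun r _ => Finset.sum_congr rfl fun s _ => ?_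
        rw [Matrix.smul_single, smul_eq_mul, mul_one]
      rw [ha]
      simp only [map_sum, _root_.map_smul, Finset.sum_mul, Finset.mul_sum, smul_mul_assoc,
        mul_smul_comm]
      exact Finset.sum_congr rfl fun r _ => Finset.sum_congr rfl fun s _ => by rw [hPbasis]
    have hPne : P ≠ 0 := fun h => hw (by rw [← hPapp i1 z0, h]; simp)
    have hPunit : IsUnit P := by
      have hker : LinearMap.ker (Matrix.mulVecLin P) = ⊥ := by
        rw [Submodule.eq_bot_iff]
        intro v hv
        rw [LinearMap.mem_ker, Matrix.mulVecLin_apply] at hv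
        by_contra hv0
        obtain ⟨t, ht⟩ := Function.ne_iff.1 hv0
        have hcol : ∀ r i : Fin ℓ, P i r = 0 := by
          intro r i
          have h1 : (Matrix.single r t ((v t)⁻¹)).mulVec v = Pi.single r 1 := by
            rw [stdBasisMatrix_mulVec, inv_mul_cancel₀ ht]
          have h2 : P.mulVec (Pi.single r 1) = 0 := by
            rw [← h1, Matrix.mulVec_mulVec, ← hPcomm, ← Matrix.mulVec_mulVec, hv,
              Matrix.mulVec_zero]
          have h3 := congrFun h2 i
          rw [Matrix.mulVec_single] at h3
          simpa using h3
        exact hPne (by ext i r; exact hcol r i)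
      have hlin : IsUnit (Matrix.mulVecLin P) := (LinearMap.isUnit_iff_ker_eq_bot _).2 hker
      have heq : Matrix.toLinAlgEquiv' P = Matrix.mulVecLin P := by
        refine LinearMap.ext fun v => ?_
        rw [Matrix.toLinAlgEquiv'_apply, Matrix.mulVecLin_apply]
      rw [← heq] at hlin
      have h4 := hlin.map (Matrix.toLinAlgEquiv' (R := K) (n := Fin ℓ)).symm
      rwa [AlgEquiv.symm_apply_apply] at h4
    have hPdetu : IsUnit P.det := (Matrix.isUnit_iff_isUnit_det P).1 hPunit
    have hPPinv : P * P⁻¹ = 1 := Matrix.mul_nonsing_inv _ hPdetu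
    have hPinvP : P⁻¹ * P = 1 := Matrix.nonsing_inv_mul _ hPdetu
    have hφP : ∀ a, φ a = P * a * P⁻¹ := by
      intro a
      calc φ a = φ a * (P * P⁻¹) := by rw [hPPinv, mul_one]
        _ = (φ a * P) * P⁻¹ := by rw [Matrix.mul_assoc]
        _ = P * a * P⁻¹ := by rw [hPcomm]
    -- assemble Q
    set Qm := blockD (1 : Matrix (Fin ℓ) (Fin ℓ) K) P⁻¹ with hQmdef
    set Qm' := blockD (1 : Matrix (Fin ℓ) (Fin ℓ) K) P with hQm'def
    have hQQ' : Qm * Qm' = 1 := by rw [hQmdef, hQm'def, blockD_mul, one_mul, hPinvP, blockD_one]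
    have hQ'Q : Qm' * Qm = 1 := by rw [hQmdef, hQm'def, blockD_mul, one_mul, hPPinv, blockD_one]
    have hQu : IsUnit Qm := isUnit_iff_exists.2 ⟨Qm', hQQ', hQ'Q⟩
    have hQinv : Qm⁻¹ = Qm' := Matrix.inv_eq_right_inv hQQ'
    have hmemE : ∀ M ∈ Eblk K ℓ ℓ, Qm * M * Qm⁻¹ ∈ Eblk K ℓ ℓ := fun M hM => by
      rw [hQinv]
      exact mul_mem (mul_mem (blockD_mem _ _) hM) (blockD_mem _ _)
    set M₀ := Qm' * supDiag K (ℓ + ℓ) * Qm with hM₀def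
    have hM₀E : M₀ ∈ Eblk K ℓ ℓ :=
      mul_mem (mul_mem (blockD_mem _ _) supDiag_mem_Eblk) (blockD_mem _ _)
    have hsL : blkL K ℓ ℓ (supDiag K (ℓ + ℓ)) = supDiag K ℓ := by
      ext i j
      simp only [blkL, Matrix.of_apply, supDiag, Fin.coe_castAdd]
    have hsR : blkR K ℓ ℓ (supDiag K (ℓ + ℓ)) = supDiag K ℓ := by
      ext i j
      simp only [blkR, Matrix.of_apply, supDiag, Fin.coe_natAdd]
      exact if_congr (Iff.intro (fun h => by omega) (fun h => by omega)) rfl rfl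
    have hM₀L : blkL K ℓ ℓ M₀ = supDiag K ℓ := by
      rw [hM₀def, hQmdef, hQm'def, blkL_mul (blockD_mem _ _), blkL_mul supDiag_mem_Eblk,
        blkL_blockD, blkL_blockD, hsL, one_mul, mul_one]
    have hM₀R : blkR K ℓ ℓ M₀ = P * supDiag K ℓ * P⁻¹ := by
      rw [hM₀def, hQmdef, hQm'def, blkR_mul (mul_mem (blockD_mem _ _) supDiag_mem_Eblk),
        blkR_mul (blockD_mem _ _), blkR_blockD, blkR_blockD, hsR]
    have hM₀Λ : M₀ ∈ Λ := by
      have hY := hF1 (blkL K ℓ ℓ M₀)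
      have h1 : blkL K ℓ ℓ (M₀ - F (blkL K ℓ ℓ M₀)) = 0 := by rw [blkL_sub, hF2, sub_self]
      have h2 : blkR K ℓ ℓ (M₀ - F (blkL K ℓ ℓ M₀)) = 0 := by
        rw [blkR_sub]
        have hFR : blkR K ℓ ℓ (F (blkL K ℓ ℓ M₀)) = P * supDiag K ℓ * P⁻¹ := by
          rw [show blkR K ℓ ℓ (F (blkL K ℓ ℓ M₀)) = φ (blkL K ℓ ℓ M₀) from rfl, hM₀L, hφP]
        rw [hFR, hM₀R, sub_self]
      have hc := eq_cornerE (sub_mem hM₀E (hΛE _ hY)) h1 h2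
      have hsubΛ : M₀ - F (blkL K ℓ ℓ M₀) ∈ Λ := hc ▸ hT _
      have hEq : M₀ = F (blkL K ℓ ℓ M₀) + (M₀ - F (blkL K ℓ ℓ M₀)) := by abel
      rw [hEq]
      exact add_mem hY hsubΛ
    refine ⟨Qm, hQu, hmemE, M₀, hM₀Λ, ?_⟩
    show Qm * M₀ * Qm⁻¹ = supDiag K (ℓ + ℓ)
    rw [hQinv, hM₀def]
    simp only [← Matrix.mul_assoc]
    rw [hQQ', one_mul, Matrix.mul_assoc, hQQ', mul_one]
  · -- I2 = ⊤ : Λ = E, take Q = 1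
    have hI2top := submodule_matrix_eq_top I2 hI2L hI2R hI2bot
    have hEsub : ∀ M ∈ Eblk K ℓ m, M ∈ Λ := by
      intro M hM
      obtain ⟨Y, hY, hY0, hYc⟩ : blkR K ℓ m M - blkR K ℓ m (F (blkL K ℓ m M)) ∈ I2 :=
        hI2top ▸ Submodule.mem_top
      set Z := F (blkL K ℓ m M) + Y with hZdef
      have hZΛ : Z ∈ Λ := add_mem (hF1 _) hY
      have hZL : blkL K ℓ m Z = blkL K ℓ m M := by rw [hZdef, blkL_add, hF2, hY0, add_zero]
      have hZR : blkR K ℓ m Z = blkR K ℓ m M := by rw [hZdef, blkR_add, hYc]; abel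
      have h1 : blkL K ℓ m (M - Z) = 0 := by rw [blkL_sub, hZL, sub_self]
      have h2 : blkR K ℓ m (M - Z) = 0 := by rw [blkR_sub, hZR, sub_self]
      have hc := eq_cornerE (sub_mem hM (hΛE _ hZΛ)) h1 h2
      have hWΛ : M - Z ∈ Λ := hc ▸ hT _
      have hMeq : M = Z + (M - Z) := by abel
      rw [hMeq]
      exact add_mem hZΛ hWΛ
    exact ⟨1, isUnit_one, fun M hM => by rwa [inv_one, one_mul, mul_one],
      ⟨supDiag K (ℓ + m), hEsub _ supDiag_mem_Eblk, by simp⟩⟩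

end Forward

/-- An `(ℓ,m)`-extension of irreducible representations `ρ` is nonsplit iff
`SupDiag_{ℓ+m} ∈ Q Λ Q⁻¹` for some invertible `Q` with `Q E_{(ℓ,m)}(K) Q⁻¹ ⊆ E_{(ℓ,m)}(K)`. -/
theorem stmt6 (k K : Type*) [Field k] [Field K] [Algebra k K]
    (A : Type*) [Ring A] [Algebra k A] (ℓ m : ℕ) (hℓ : 0 < ℓ) (hm : 0 < m)
    (ρ : A →ₐ[k] Matrix (Fin (ℓ + m)) (Fin (ℓ + m)) K)
    (hE : ∀ a, ρ a ∈ Eblk K ℓ m)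
    (hirrL : Algebra.adjoin K (Set.range fun a => blkL K ℓ m (ρ a)) = ⊤)
    (hirrR : Algebra.adjoin K (Set.range fun a => blkR K ℓ m (ρ a)) = ⊤)
    (Λ : Subalgebra K (Matrix (Fin (ℓ + m)) (Fin (ℓ + m)) K))
    (hΛ : Λ = Algebra.adjoin K (Set.range ρ)) :
    ¬ IsSemisimpleRing Λ ↔
      ∃ Q : Matrix (Fin (ℓ + m)) (Fin (ℓ + m)) K, IsUnit Q ∧
        (∀ M ∈ Eblk K ℓ m, Q * M * Q⁻¹ ∈ Eblk K ℓ m) ∧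
        supDiag K (ℓ + m) ∈
          (fun M => Q * M * Q⁻¹) '' (Λ : Set (Matrix (Fin (ℓ + m)) (Fin (ℓ + m)) K)) := by
  have hΛE : ∀ X ∈ Λ, X ∈ Eblk K ℓ m := by
    intro X hX
    rw [hΛ] at hX
    exact Algebra.adjoin_le (fun y hy => by obtain ⟨a, rfl⟩ := hy; exact hE a) hX
  have hρΛ : ∀ a, ρ a ∈ Λ := fun a => by rw [hΛ]; exact Algebra.subset_adjoin ⟨a, rfl⟩
  have surjL : ∀ a : Matrix (Fin ℓ) (Fin ℓ) K, ∃ X ∈ Λ, blkL K ℓ m X = a := by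
    intro a
    let SL : Subalgebra K (Matrix (Fin ℓ) (Fin ℓ) K) :=
      { carrier := { u | ∃ X ∈ Λ, blkL K ℓ m X = u }
        mul_mem' := by
          rintro u v ⟨X, hX, rfl⟩ ⟨Y, hY, rfl⟩
          exact ⟨X * Y, mul_mem hX hY, blkL_mul (hΛE Y hY)⟩
        add_mem' := by
          rintro u v ⟨X, hX, rfl⟩ ⟨Y, hY, rfl⟩
          exact ⟨X + Y, add_mem hX hY, blkL_add X Y⟩
        one_mem' := ⟨1, one_mem _, blkL_one⟩
        zero_mem' := ⟨0, zero_mem _, blkL_zero⟩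
        algebraMap_mem' := fun r => ⟨algebraMap K _ r, Subalgebra.algebraMap_mem Λ r,
          blkL_algebraMap r⟩ }
    have h1 : ⊤ ≤ SL := by
      rw [← hirrL]
      refine Algebra.adjoin_le ?_
      rintro _ ⟨a', rfl⟩
      exact ⟨ρ a', hρΛ a', rfl⟩
    exact h1 trivial
  have surjR : ∀ c : Matrix (Fin m) (Fin m) K, ∃ X ∈ Λ, blkR K ℓ m X = c := by
    intro c
    let SR : Subalgebra K (Matrix (Fin m) (Fin m) K) :=
      { carrier := { u | ∃ X ∈ Λ, blkR K ℓ m X = u }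
        mul_mem' := by
          rintro u v ⟨X, hX, rfl⟩ ⟨Y, hY, rfl⟩
          exact ⟨X * Y, mul_mem hX hY, blkR_mul (hΛE X hX)⟩
        add_mem' := by
          rintro u v ⟨X, hX, rfl⟩ ⟨Y, hY, rfl⟩
          exact ⟨X + Y, add_mem hX hY, blkR_add X Y⟩
        one_mem' := ⟨1, one_mem _, blkR_one⟩
        zero_mem' := ⟨0, zero_mem _, blkR_zero⟩
        algebraMap_mem' := fun r => ⟨algebraMap K _ r, Subalgebra.algebraMap_mem Λ r,
          blkR_algebraMap r⟩ }
    have h1 : ⊤ ≤ SR := by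
      rw [← hirrR]
      refine Algebra.adjoin_le ?_
      rintro _ ⟨a', rfl⟩
      exact ⟨ρ a', hρΛ a', rfl⟩
    exact h1 trivial
  constructor
  · intro hns
    exact forward_dir hℓ hm Λ hΛE surjL surjR hns
  · rintro ⟨Q, hQ, hQE, M, hMΛ, hQM⟩
    exact backward_dir hℓ hm Λ hΛE Q hQ hQE M hMΛ hQM
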